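/- Fiducial normal form: for any real phases α_{z,x} (indexed by z ∈ ℤ_d^{n−1}, x ∈ ℤ_d), the equal-weight superposition ψ = d^{−n/2} Σ_{z,x} e^{iα_{z,x}} Φ^{(d)}_{z,x} satisfies ψ = S_d(n)·(H^{(n)})†·D_α·H^{⊗n}|0,0,…,0⟩, where D_α is the diagonal unitary on (ℂ^d)^{⊗n} with diagonal entries e^{iα_{z,x}} in the computational basis (identifying the basis index with (z,x) ∈ ℤ_dⁿ). -/

import Mathlib

open Matrix Complex Finset

/-- ω = exp(2πi/d). -/
noncomputable def omg (d : ℕ) : ℂ := Complex.exp (2 * Real.pi * Complex.I / d)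

/-- Generalized Pauli Z on ℂ^d: Z|j⟩ = ω^j |j⟩. -/
noncomputable def Zd (d : ℕ) : Matrix (ZMod d) (ZMod d) ℂ :=
  Matrix.diagonal fun j => omg d ^ j.val

/-- Generalized Pauli X on ℂ^d: X|j⟩ = |j+1 mod d⟩. -/
noncomputable def Xd (d : ℕ) : Matrix (ZMod d) (ZMod d) ℂ :=
  Matrix.of fun j k => if j = k + 1 then 1 else 0

/-- Discrete Fourier transform H = d^{-1/2} Σ ω^{jk} |j⟩⟨k|. -/
noncomputable def Hd (d : ℕ) : Matrix (ZMod d) (ZMod d) ℂ :=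
  Matrix.of fun j k => (Real.sqrt d : ℂ)⁻¹ * omg d ^ (j.val * k.val)

/-- Tensor product of single-qudit operators, as a matrix on (ℂ^d)^{⊗n}. -/
noncomputable def tensorOp {d n : ℕ} (A : Fin n → Matrix (ZMod d) (ZMod d) ℂ) :
    Matrix (Fin n → ZMod d) (Fin n → ZMod d) ℂ :=
  Matrix.of fun v w => ∏ i, A i (v i) (w i)

/-- Single-site operator A acting on qudit i (identity elsewhere). -/
noncomputable def single {d n : ℕ} (i : Fin n) (A : Matrix (ZMod d) (ZMod d) ℂ) :
    Matrix (Fin n → ZMod d) (Fin n → ZMod d) ℂ :=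
  tensorOp fun j => if j = i then A else 1

/-- The inner product ⟨f, g⟩ = Σ conj(f v) g v (antilinear in the first argument). -/
noncomputable def dotc {ι : Type*} [Fintype ι] (f g : ι → ℂ) : ℂ :=
  ∑ v, (starRingEnd ℂ) (f v) * g v

/-- Computational basis vector |a⟩. -/
noncomputable def ket {ι : Type*} [DecidableEq ι] (a : ι) : ι → ℂ :=
  fun v => if v = a then 1 else 0

/-- The unitaries U_g, g = (z₁,…,z_{n−1},x) ∈ ℤ_dⁿ:
U_g = ∏_{i=1}^{n−1} (Z^{(i)}(Z^{(i+1)})⁻¹)^{zᵢ} · (X⊗⋯⊗X)^x.  -/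
noncomputable def Ug (d n : ℕ) [NeZero d] [NeZero n] (g : Fin n → ZMod d) :
    Matrix (Fin n → ZMod d) (Fin n → ZMod d) ℂ :=
  (((List.finRange (n - 1)).map fun i =>
      (_root_.single (⟨i.val, by have := i.isLt; omega⟩ : Fin n) (Zd d) *
          (_root_.single (⟨i.val + 1, by have := i.isLt; omega⟩ : Fin n) (Zd d))⁻¹)
        ^ (g ⟨i.val, by have := i.isLt; omega⟩).val).prod) *
    (tensorOp fun _ : Fin n => Xd d)
      ^ (g ⟨n - 1, by have := Nat.pos_of_ne_zero (NeZero.ne n); omega⟩).val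

/-- The joint eigenstates Φ^{(d)}_{z,x} = d^{-1/2} Σ_k ω^{−kx} |s₁+k,…,s_{n−1}+k,k⟩,
with sᵢ = zᵢ + ⋯ + z_{n−1}. -/
noncomputable def Phi (d n : ℕ) [NeZero d] (z : Fin (n - 1) → ZMod d) (x : ZMod d) :
    (Fin n → ZMod d) → ℂ :=
  fun v => (Real.sqrt d : ℂ)⁻¹ * ∑ k : ZMod d,
    (omg d ^ (k.val * x.val))⁻¹ *
      (if ∀ i : Fin n, v i =
          (if h : i.val < n - 1
            then ∑ j ∈ Finset.univ.filter (fun j : Fin (n - 1) => (⟨i.val, h⟩ : Fin (n - 1)) ≤ j), z j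
            else 0) + k
        then 1 else 0)


/-- The SUM gate with target `a` and control `b`: |jₐ, j_b⟩ ↦ |jₐ + j_b, j_b⟩. -/
noncomputable def SUMg {d n : ℕ} (a b : Fin n) :
    Matrix (Fin n → ZMod d) (Fin n → ZMod d) ℂ :=
  Matrix.of fun v w => if v = Function.update w a (w a + w b) then 1 else 0

/-- S_d(n) = SUM_{(2→1)}·SUM_{(3→2)}···SUM_{(n→n−1)} (0-based sites (0,1),(1,2),…). -/
noncomputable def Sgate (d n : ℕ) [NeZero d] :
    Matrix (Fin n → ZMod d) (Fin n → ZMod d) ℂ :=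
  (((List.finRange (n - 1)).map fun i =>
    SUMg (d := d) (n := n) ⟨i.val, by have := i.isLt; omega⟩
      ⟨i.val + 1, by have := i.isLt; omega⟩)).prod

/-!
STATEMENT 1: Fiducial normal form: ψ = d^{−n/2} Σ_{z,x} e^{iα_{z,x}} Φ^{(d)}_{z,x}
equals S_d(n)·(H^{(n)})†·D_α·H^{⊗n}|0,…,0⟩, where D_α is the diagonal unitary with
entries e^{iα_{z,x}} (basis index v identified with (z,x) ∈ ℤ_dⁿ).
-/
section Aux
variable {d n : ℕ}

lemma omg_conj_pow (d m : ℕ) : (starRingEnd ℂ) (omg d ^ m) = (omg d ^ m)⁻¹ := by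
  rw [map_pow, ← inv_pow]
  congr 1
  rw [omg, ← Complex.exp_conj, ← Complex.exp_neg]
  congr 1
  have h2 : (starRingEnd ℂ) (2 : ℂ) = 2 := map_ofNat _ 2
  rw [map_div₀, _root_.map_mul, _root_.map_mul, h2, Complex.conj_ofReal, Complex.conj_I,
    map_natCast]
  ring

lemma sumCollapse {M : Type*} [AddCommMonoid M] [NeZero d] (u : Fin n → ZMod d) (i : Fin n)
    (F : (Fin n → ZMod d) → M)
    (h0 : ∀ w, w ≠ Function.update u i (w i) → F w = 0) :
    ∑ w, F w = ∑ x : ZMod d, F (Function.update u i x) := by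
  have key : ∀ w, F w = ∑ x : ZMod d, if w = Function.update u i x then F w else 0 := by
    intro w
    by_cases hw : w = Function.update u i (w i)
    · rw [Finset.sum_eq_single (w i)]
      · rw [if_pos hw]
      · intro x _ hx
        rw [if_neg]; intro hc; apply hx; rw [hc, Function.update_self]
      · simp
    · rw [h0 w hw, Finset.sum_eq_zero]
      intro x _; rw [if_neg]; intro hc
      apply hw
      have hx : w i = x := by rw [hc, Function.update_self]
      rw [hx]; exact hc
  calc ∑ w, F w = ∑ w, ∑ x : ZMod d, if w = Function.update u i x then F w else 0 :=
        Finset.sum_congr rfl (fun w _ => key w)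
    _ = ∑ x : ZMod d, ∑ w, if w = Function.update u i x then F w else 0 := Finset.sum_comm
    _ = ∑ x : ZMod d, F (Function.update u i x) := by
        refine Finset.sum_congr rfl fun x _ => ?_
        rw [Finset.sum_ite_eq' Finset.univ (Function.update u i x) F]
        simp

lemma single_mulVec [NeZero d] (i : Fin n) (A : Matrix (ZMod d) (ZMod d) ℂ)
    (ψ : (Fin n → ZMod d) → ℂ) (u : Fin n → ZMod d) :
    (single i A *ᵥ ψ) u = ∑ x : ZMod d, A (u i) x * ψ (Function.update u i x) := by
  have : (single i A *ᵥ ψ) u = ∑ w, (∏ j, (if j = i then A else 1) (u j) (w j)) * ψ w := by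
    simp [Matrix.mulVec, dotProduct, _root_.single, tensorOp]
  rw [this, sumCollapse u i]
  · refine Finset.sum_congr rfl fun x _ => ?_
    congr 1
    rw [Finset.prod_eq_single i]
    · simp
    · intro j _ hj
      rw [if_neg hj, Function.update_of_ne hj, Matrix.one_apply_eq]
    · simp
  · intro w hw
    have : ∃ j, w j ≠ Function.update u i (w i) j := by
      by_contra hc
      push_neg at hc
      exact hw (funext hc)
    obtain ⟨j, hj⟩ := this
    have hji : j ≠ i := by rintro rfl; simp at hj
    rw [Function.update_of_ne hji] at hj
    have : (∏ j' : Fin n, (if j' = i then A else 1) (u j') (w j')) = 0 := by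
      refine Finset.prod_eq_zero (Finset.mem_univ j) ?_
      rw [if_neg hji, Matrix.one_apply, if_neg (fun h => hj h.symm)]
    rw [this, zero_mul]

lemma single_conjTranspose [NeZero d] (i : Fin n) (A : Matrix (ZMod d) (ZMod d) ℂ) :
    (single i A)ᴴ = single i Aᴴ := by
  ext v w
  simp only [Matrix.conjTranspose_apply, _root_.single, tensorOp, Matrix.of_apply]
  rw [star_prod]
  refine Finset.prod_congr rfl fun j _ => ?_
  by_cases hj : j = i
  · simp [hj, Matrix.conjTranspose_apply]
  · simp only [if_neg hj, Matrix.one_apply]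
    split <;> rename_i h
    · simp [h]
    · rw [if_neg (fun hc => h hc.symm)]; simp

end Aux
section Aux2
variable {d n : ℕ}

lemma SUMg_mulVec [NeZero d] (a b : Fin n) (hab : a ≠ b)
    (ψ : (Fin n → ZMod d) → ℂ) (v : Fin n → ZMod d) :
    (SUMg (d := d) a b *ᵥ ψ) v = ψ (Function.update v a (v a - v b)) := by
  have key : ∀ w : Fin n → ZMod d,
      (v = Function.update w a (w a + w b)) ↔ (w = Function.update v a (v a - v b)) := by
    intro w
    constructor
    · intro h
      funext j
      by_cases hj : j = a
      · subst hj
        rw [Function.update_self, h, Function.update_self,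
          Function.update_of_ne (Ne.symm hab), add_sub_cancel_right]
      · rw [Function.update_of_ne hj, h, Function.update_of_ne hj]
    · intro h
      funext j
      by_cases hj : j = a
      · subst hj
        rw [Function.update_self, h, Function.update_self,
          Function.update_of_ne (Ne.symm hab), sub_add_cancel]
      · rw [Function.update_of_ne hj, h, Function.update_of_ne hj]
  have : (SUMg (d := d) a b *ᵥ ψ) v
      = ∑ w, (if w = Function.update v a (v a - v b) then (1:ℂ) else 0) * ψ w := by
    simp only [Matrix.mulVec, dotProduct, SUMg, Matrix.of_apply]
    exact Finset.sum_congr rfl fun w _ => by rw [if_congr (key w) rfl rfl]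
  rw [this]
  simp

set_option maxHeartbeats 2000000 in
lemma Sgate_drop [NeZero d] (hn : 2 ≤ n) : ∀ (t j : ℕ), j + t = n - 1 →
    ∀ (ψ : (Fin n → ZMod d) → ℂ) (v : Fin n → ZMod d),
    (((((List.finRange (n - 1)).drop j).map fun i =>
        SUMg (d := d) (n := n) ⟨i.val, by have := i.isLt; omega⟩
          ⟨i.val + 1, by have := i.isLt; omega⟩)).prod *ᵥ ψ) v
      = ψ (fun i => if h : j ≤ i.val ∧ i.val + 1 < n
          then v i - v ⟨i.val + 1, h.2⟩ else v i) := by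
  intro t
  induction t with
  | zero =>
    intro j hj ψ v
    have hdrop : (List.finRange (n - 1)).drop j = [] := by
      apply List.drop_eq_nil_of_le
      simp [hj.symm]
    rw [hdrop]
    simp only [List.map_nil, List.prod_nil, Matrix.one_mulVec]
    congr 1
    funext i
    rw [dif_neg]
    rintro ⟨h1, h2⟩
    omega
  | succ t ih =>
    intro j hj ψ v
    have hjlt : j < (List.finRange (n - 1)).length := by simp; omega
    rw [List.drop_eq_getElem_cons hjlt, List.getElem_finRange, List.map_cons, List.prod_cons,
      ← Matrix.mulVec_mulVec]
    have hj1 : j < n - 1 := by simpa using hjlt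
    set a : Fin n := ⟨j, by omega⟩ with ha
    set b : Fin n := ⟨j + 1, by omega⟩ with hb
    have hab : a ≠ b := by
      intro h
      have := congrArg Fin.val h
      simp [ha, hb] at this
    rw [show (SUMg (d := d) (n := n)
        ⟨((Fin.cast (by simp) (⟨j, hjlt⟩ : Fin (List.finRange (n-1)).length)) : Fin (n-1)).val,
          by have := ((Fin.cast (by simp) (⟨j, hjlt⟩ : Fin (List.finRange (n-1)).length)) : Fin (n-1)).isLt; omega⟩
        ⟨((Fin.cast (by simp) (⟨j, hjlt⟩ : Fin (List.finRange (n-1)).length)) : Fin (n-1)).val + 1,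
          by have := ((Fin.cast (by simp) (⟨j, hjlt⟩ : Fin (List.finRange (n-1)).length)) : Fin (n-1)).isLt; omega⟩)
      = SUMg (d := d) (n := n) a b from rfl]
    rw [SUMg_mulVec a b hab]
    rw [ih (j + 1) (by omega)]
    congr 1
    funext i
    set v' := Function.update v a (v a - v b) with hv'
    by_cases hi : i.val = j
    · have hia : i = a := Fin.ext hi
      have h2 : i.val + 1 < n := by omega
      rw [dif_neg (by omega), dif_pos ⟨(by omega : j ≤ i.val), h2⟩]
      have e1 : v' i = v a - v b := by
        rw [hia, hv']; exact Function.update_self a (v a - v b) v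
      exact e1.trans (congrArg₂ (fun x y => x - y) (congrArg v hia.symm)
        (congrArg v (Fin.ext (show b.val = i.val + 1 by rw [hb, hi]))))
    · have hiv : v' i = v i := by
        rw [hv', Function.update_of_ne (Fin.ne_of_val_ne (by simp [ha]; omega))]
      by_cases hc : j ≤ i.val ∧ i.val + 1 < n
      · have hc' : j + 1 ≤ i.val ∧ i.val + 1 < n := ⟨by omega, hc.2⟩
        rw [dif_pos hc', dif_pos hc, hiv]
        congr 1
        rw [hv', Function.update_of_ne (Fin.ne_of_val_ne (by simp [ha]; omega))]
      · have hc' : ¬(j + 1 ≤ i.val ∧ i.val + 1 < n) := by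
          rintro ⟨h1, h2⟩; exact hc ⟨by omega, h2⟩
        rw [dif_neg hc', dif_neg hc, hiv]

lemma Sgate_mulVec [NeZero d] (hn : 2 ≤ n)
    (ψ : (Fin n → ZMod d) → ℂ) (v : Fin n → ZMod d) :
    (Sgate d n *ᵥ ψ) v
      = ψ (fun i => if h : i.val + 1 < n then v i - v ⟨i.val + 1, h⟩ else v i) := by
  have h0 : (List.finRange (n - 1)) = (List.finRange (n - 1)).drop 0 := rfl
  rw [Sgate, h0, Sgate_drop hn (n - 1) 0 (by omega)]
  congr 1
  funext i
  by_cases h : i.val + 1 < n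
  · rw [dif_pos ⟨Nat.zero_le _, h⟩, dif_pos h]
  · rw [dif_neg (by rintro ⟨_, h2⟩; exact h h2), dif_neg h]

end Aux2
section Aux3
variable {d n : ℕ}

/-- The vector of partial sums appearing in `Phi`. -/
noncomputable def Sv {d n : ℕ} (z : Fin (n - 1) → ZMod d) (i : Fin n) : ZMod d :=
  if h : i.val < n - 1
  then ∑ j ∈ Finset.univ.filter (fun j : Fin (n - 1) => (⟨i.val, h⟩ : Fin (n - 1)) ≤ j), z j
  else 0

lemma Phi_eq [NeZero d] (z : Fin (n - 1) → ZMod d) (x : ZMod d) (v : Fin n → ZMod d) :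
    Phi d n z x v = (Real.sqrt d : ℂ)⁻¹ * ∑ k : ZMod d,
      (omg d ^ (k.val * x.val))⁻¹ *
        (if ∀ i : Fin n, v i = Sv z i + k then 1 else 0) := rfl

lemma Sv_last (hn : 2 ≤ n) (z : Fin (n - 1) → ZMod d) (i : Fin n) (hi : i.val = n - 1) :
    Sv z i = 0 := dif_neg (by omega)

lemma Sv_step (hn : 2 ≤ n) (z : Fin (n - 1) → ZMod d) (i : Fin n) (h : i.val < n - 1) :
    Sv z i = z ⟨i.val, h⟩ + Sv z ⟨i.val + 1, by omega⟩ := by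
  rw [Sv, dif_pos h]
  have hA : Finset.univ.filter (fun j : Fin (n - 1) => (⟨i.val, h⟩ : Fin (n - 1)) ≤ j)
      = insert (⟨i.val, h⟩ : Fin (n - 1))
          (Finset.univ.filter (fun j : Fin (n - 1) => i.val + 1 ≤ j.val)) := by
    ext j
    simp only [Finset.mem_filter, Finset.mem_insert, Finset.mem_univ, true_and, Fin.le_def,
      Fin.ext_iff]
    omega
  have hB : (⟨i.val, h⟩ : Fin (n - 1)) ∉
      Finset.univ.filter (fun j : Fin (n - 1) => i.val + 1 ≤ j.val) := by
    simp
  rw [hA, Finset.sum_insert hB]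
  congr 1
  rw [Sv]
  by_cases h2 : i.val + 1 < n - 1
  · rw [dif_pos h2]
    refine Finset.sum_congr ?_ fun _ _ => rfl
    ext j
    simp only [Finset.mem_filter, Finset.mem_univ, true_and, Fin.le_def]
  · rw [dif_neg h2]
    apply Finset.sum_eq_zero
    intro j hj
    exfalso
    rw [Finset.mem_filter] at hj
    have := j.isLt
    omega

lemma cond_iff [NeZero d] (hn : 2 ≤ n) (z : Fin (n - 1) → ZMod d) (k : ZMod d)
    (v : Fin n → ZMod d) :
    (∀ i : Fin n, v i = Sv z i + k)
      ↔ (z = (fun i : Fin (n - 1) =>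
            v ⟨i.val, by have := i.isLt; omega⟩ - v ⟨i.val + 1, by have := i.isLt; omega⟩)
          ∧ k = v ⟨n - 1, by omega⟩) := by
  constructor
  · intro h
    have hk : k = v ⟨n - 1, by omega⟩ := by
      have := h ⟨n - 1, by omega⟩
      rw [Sv_last hn z _ rfl, zero_add] at this
      exact this.symm
    refine ⟨funext fun i => ?_, hk⟩
    have hlt : (⟨i.val, by have := i.isLt; omega⟩ : Fin n).val < n - 1 := i.isLt
    have h1 := h ⟨i.val, by have := i.isLt; omega⟩
    have h2 := h ⟨i.val + 1, by have := i.isLt; omega⟩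
    have e := Sv_step hn z ⟨i.val, by have := i.isLt; omega⟩ hlt
    linear_combination h2 - h1 - e
  · rintro ⟨hz, hk⟩
    have claim : ∀ t : ℕ, ∀ i : Fin n, n - 1 - i.val ≤ t → v i = Sv z i + k := by
      intro t
      induction t with
      | zero =>
        intro i hi
        have hi' : i.val = n - 1 := by have := i.isLt; omega
        rw [Sv_last hn z i hi', zero_add, hk]
        exact congrArg v (Fin.ext hi')
      | succ t ih =>
        intro i hi
        by_cases hc : n - 1 ≤ i.val
        · have hi' : i.val = n - 1 := by have := i.isLt; omega
          rw [Sv_last hn z i hi', zero_add, hk]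
          exact congrArg v (Fin.ext hi')
        · have hlt : i.val < n - 1 := by omega
          have ih' := ih ⟨i.val + 1, by omega⟩ (by simp; omega)
          have e := Sv_step hn z i hlt
          have hz' := congrFun hz (⟨i.val, hlt⟩ : Fin (n - 1))
          linear_combination ih' - e - hz'
    intro i
    exact claim (n - 1) i (by omega)

lemma diag_mulVec {ι : Type*} [Fintype ι] [DecidableEq ι] (f : ι → ℂ) (g : ι → ℂ) :
    Matrix.diagonal f *ᵥ g = fun w => f w * g w := by
  funext w
  simp [Matrix.mulVec, dotProduct, Matrix.diagonal_apply, ite_mul]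

lemma tensor_H_ket [NeZero d] :
    (tensorOp fun _ : Fin n => Hd d) *ᵥ ket (fun _ : Fin n => (0 : ZMod d))
      = fun _ => ((Real.sqrt d : ℂ)⁻¹) ^ n := by
  funext w
  simp only [Matrix.mulVec, dotProduct, ket, tensorOp, Matrix.of_apply, mul_ite, mul_one,
    mul_zero]
  rw [Finset.sum_ite_eq' Finset.univ (fun _ => (0 : ZMod d))
    (fun w' => ∏ i, Hd d (w i) (w' i))]
  simp [Hd, ZMod.val_zero]

end Aux3
theorem stmt1 (d n : ℕ) [NeZero d] (hd : 2 ≤ d) (hn : 2 ≤ n)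
    (α : (Fin (n - 1) → ZMod d) → ZMod d → ℝ) :
    (fun v : Fin n → ZMod d =>
      ((Real.sqrt d : ℂ) ^ n)⁻¹ * ∑ z : Fin (n - 1) → ZMod d, ∑ x : ZMod d,
        Complex.exp (α z x * Complex.I) * Phi d n z x v)
    = (Sgate d n * (single (⟨n - 1, by omega⟩ : Fin n) (Hd d))ᴴ *
        Matrix.diagonal (fun v : Fin n → ZMod d =>
          Complex.exp ((α (fun i : Fin (n - 1) => v ⟨i.val, by have := i.isLt; omega⟩)
            (v ⟨n - 1, by omega⟩) : ℝ) * Complex.I)) *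
        tensorOp fun _ : Fin n => Hd d) *ᵥ ket (fun _ : Fin n => (0 : ZMod d)) := by
  funext v
  simp only [← Matrix.mulVec_mulVec]
  rw [tensor_H_ket, diag_mulVec, Sgate_mulVec hn, single_conjTranspose, _root_.single_mulVec]
  have key : ∀ z : Fin (n - 1) → ZMod d, ∀ x : ZMod d,
      Complex.exp (α z x * Complex.I) * Phi d n z x v
      = if z = (fun i : Fin (n - 1) => v ⟨i.val, by have := i.isLt; omega⟩
            - v ⟨i.val + 1, by have := i.isLt; omega⟩)
        then Complex.exp (α z x * Complex.I) *
          ((Real.sqrt d : ℂ)⁻¹ * (omg d ^ ((v ⟨n - 1, by omega⟩).val * x.val))⁻¹)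
        else 0 := by
    intro z x
    rw [Phi_eq]
    have hsum : ∑ k : ZMod d, (omg d ^ (k.val * x.val))⁻¹ *
        (if ∀ i : Fin n, v i = Sv z i + k then 1 else 0)
        = if z = (fun i : Fin (n - 1) => v ⟨i.val, by have := i.isLt; omega⟩
            - v ⟨i.val + 1, by have := i.isLt; omega⟩)
          then (omg d ^ ((v ⟨n - 1, by omega⟩).val * x.val))⁻¹ else 0 := by
      rw [Finset.sum_congr rfl (fun k _ => by rw [if_congr (cond_iff hn z k v) rfl rfl])]
      by_cases hzz : z = (fun i : Fin (n - 1) => v ⟨i.val, by have := i.isLt; omega⟩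
            - v ⟨i.val + 1, by have := i.isLt; omega⟩)
      · simp [hzz, mul_ite, Finset.sum_ite_eq']
      · simp [hzz]
    rw [hsum]
    split
    · ring
    · simp
  have hLHS : ∑ z : Fin (n - 1) → ZMod d, ∑ x : ZMod d,
        Complex.exp (α z x * Complex.I) * Phi d n z x v
      = ∑ x : ZMod d, Complex.exp (α (fun i : Fin (n - 1) =>
            v ⟨i.val, by have := i.isLt; omega⟩ - v ⟨i.val + 1, by have := i.isLt; omega⟩) x
            * Complex.I) *
          ((Real.sqrt d : ℂ)⁻¹ * (omg d ^ ((v ⟨n - 1, by omega⟩).val * x.val))⁻¹) := by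
    rw [Finset.sum_comm]
    refine Finset.sum_congr rfl fun x _ => ?_
    rw [Finset.sum_congr rfl fun z _ => key z x]
    simp [Finset.sum_ite_eq']
  rw [hLHS, Finset.mul_sum]
  refine Finset.sum_congr rfl fun x _ => ?_
  rw [dif_neg (show ¬((⟨n - 1, by omega⟩ : Fin n).val + 1 < n) by simp; omega)]
  have hHc : (Hd d)ᴴ (v ⟨n - 1, by omega⟩) x
      = (Real.sqrt d : ℂ)⁻¹ * (omg d ^ ((v ⟨n - 1, (by omega : n - 1 < n)⟩).val * x.val))⁻¹ := by
    rw [Matrix.conjTranspose_apply, Hd]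
    show (starRingEnd ℂ) _ = _
    rw [Matrix.of_apply, _root_.map_mul, map_inv₀, Complex.conj_ofReal, omg_conj_pow,
      Nat.mul_comm]
  have hx : Function.update
      (fun i : Fin n => if h : (i : ℕ) + 1 < n then v i - v ⟨(i : ℕ) + 1, h⟩ else v i)
      (⟨n - 1, by omega⟩ : Fin n) x (⟨n - 1, by omega⟩ : Fin n) = x :=
    Function.update_self _ _ _
  have hz : (fun i : Fin (n - 1) => Function.update
      (fun i : Fin n => if h : (i : ℕ) + 1 < n then v i - v ⟨(i : ℕ) + 1, h⟩ else v i)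
      (⟨n - 1, by omega⟩ : Fin n) x ⟨i.val, by have := i.isLt; omega⟩)
      = (fun i : Fin (n - 1) => v ⟨i.val, by have := i.isLt; omega⟩
          - v ⟨i.val + 1, by have := i.isLt; omega⟩) := by
    funext i
    have hne : (⟨i.val, by have := i.isLt; omega⟩ : Fin n) ≠ ⟨n - 1, by omega⟩ :=
      Fin.ne_of_val_ne (show i.val ≠ n - 1 by have := i.isLt; omega)
    rw [Function.update_of_ne hne]
    show (if h : i.val + 1 < n then v ⟨i.val, _⟩ - v ⟨i.val + 1, h⟩ else v ⟨i.val, _⟩) = _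
    rw [dif_pos (by have := i.isLt; omega)]
  rw [hHc, hx, hz, inv_pow]
  ring
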